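/- arXiv:2211.07996 — 3 statements merged into one kernel-verified Lean document; each statement's English description precedes it below -/
import Mathlib

section
/- Fix integers r, s ≥ 1 and t ≥ 2. Then the average size of the t-core of a uniformly random partition in Par_{r,s}, namely (1/C(r+s,r)) · Σ_{λ ∈ Par_{r,s}} |core_t(λ)|, equals (rs/((r+s)(r+s−1))) · ( C((r+s) mod t, 2) + ⌊(r+s)/t⌋ · C(t,2) ). -/
open Finset

/-- Partitions in the `r × s` rectangle: weakly decreasing `r`-tuples with parts at most `s`. -/
def IsRectPartition (r s : ℕ) (lam : Fin r → ℕ) : Prop :=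
  (∀ i j : Fin r, i ≤ j → lam j ≤ lam i) ∧ ∀ i, lam i ≤ s

/-- The beta-set `β(λ) = {λ_i + r − i : 1 ≤ i ≤ r}` (with 0-indexed `i`). -/
def betaSet (r : ℕ) (lam : Fin r → ℕ) : Finset ℕ :=
  Finset.image (fun i : Fin r => lam i + (r - 1 - (i : ℕ))) Finset.univ

/-- `λ` is a `t`-core: for every `b ∈ β(λ)` with `b ≥ t`, also `b − t ∈ β(λ)`. -/
def IsTCore (r t : ℕ) (lam : Fin r → ℕ) : Prop :=
  ∀ b ∈ betaSet r lam, t ≤ b → b - t ∈ betaSet r lam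

/-- `n_i = ⌊(r+s+t−1−i)/t⌋`. -/
def nres (r s t i : ℕ) : ℕ := (r + s + t - 1 - i) / t

/-- `a_i(λ) = #{b ∈ β(λ) : b ≡ i (mod t)}`. -/
def aCount (r t : ℕ) (lam : Fin r → ℕ) (i : ℕ) : ℕ :=
  ((betaSet r lam).filter fun b => b % t = i).card

/-- The justification `J(λ)`: in each residue class `i` mod `t`, the `a_i(λ)` smallest
nonnegative integers congruent to `i`. -/
def justification (r t : ℕ) (lam : Fin r → ℕ) : Finset ℕ :=
  (Finset.range t).biUnion fun i =>
    (Finset.range (aCount r t lam i)).image fun m => i + m * t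

/-- The size of the `t`-core of `λ`: `Σ_{b ∈ J(λ)} b − r(r−1)/2`. -/
def coreSize (r t : ℕ) (lam : Fin r → ℕ) : ℕ :=
  (∑ b ∈ justification r t lam, b) - r * (r - 1) / 2

/-! ### Auxiliary counting lemmas -/

/-- Number of `r`-subsets of `S` containing a fixed subset `P`. -/
lemma card_supersets {α : Type*} [DecidableEq α] (S P : Finset α)
    (hPS : P ⊆ S) (r : ℕ) (hPr : P.card ≤ r) :
    ((S.powersetCard r).filter (fun B => P ⊆ B)).card
      = (S.card - P.card).choose (r - P.card) := by
  rw [← Finset.card_sdiff_of_subset hPS, ← Finset.card_powersetCard (r - P.card) (S \ P)]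
  apply Finset.card_bij (fun B _ => B \ P)
  · intro B hB
    simp only [mem_filter, mem_powersetCard] at hB
    obtain ⟨⟨hBS, hBr⟩, hPB⟩ := hB
    simp only [mem_powersetCard]
    exact ⟨sdiff_subset_sdiff hBS (le_refl P), by rw [card_sdiff_of_subset hPB, hBr]⟩
  · intro B1 h1 B2 h2 h
    simp only [mem_filter, mem_powersetCard] at h1 h2
    have := congrArg (· ∪ P) h
    simpa [sdiff_union_of_subset h1.2, sdiff_union_of_subset h2.2] using this
  · intro C hC
    simp only [mem_powersetCard] at hC
    obtain ⟨hCS, hCc⟩ := hC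
    have hd : Disjoint C P := (subset_sdiff.mp hCS).2
    refine ⟨C ∪ P, ?_, ?_⟩
    · simp only [mem_filter, mem_powersetCard]
      refine ⟨⟨union_subset (hCS.trans sdiff_subset) hPS, ?_⟩, subset_union_right⟩
      rw [card_union_of_disjoint hd, hCc]
      omega
    · rw [union_sdiff_right, sdiff_eq_self_of_disjoint hd]

/-- Binomial moments of the intersection pattern of a random `r`-subset. -/
lemma sum_choose_card_inter {α : Type*} [DecidableEq α] (S T : Finset α) (hT : T ⊆ S)
    (r j : ℕ) (hj : j ≤ r) :
    ∑ B ∈ S.powersetCard r, ((B ∩ T).card).choose j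
      = T.card.choose j * (S.card - j).choose (r - j) := by
  have key : ∀ B : Finset α, (B ∩ T).card.choose j
      = ((T.powersetCard j).filter (fun P => P ⊆ B)).card := by
    intro B
    rw [← Finset.card_powersetCard]
    congr 1
    ext P
    simp only [mem_powersetCard, mem_filter, subset_inter_iff]
    tauto
  simp only [key, Finset.card_filter]
  rw [Finset.sum_comm]
  have : ∀ P ∈ T.powersetCard j,
      (∑ B ∈ S.powersetCard r, if P ⊆ B then (1:ℕ) else 0)
        = (S.card - j).choose (r - j) := by
    intro P hP
    rw [← Finset.card_filter]
    rw [mem_powersetCard] at hP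
    rw [card_supersets S P (hP.1.trans hT) r (by omega), hP.2]
  rw [Finset.sum_congr rfl this, Finset.sum_const, Finset.card_powersetCard, smul_eq_mul]

/-- A finset of naturals of cardinality `c` has sum at least `0+1+...+(c-1)`. -/
lemma sum_range_card_le_sum (s : Finset ℕ) : ∑ k ∈ Finset.range s.card, k ≤ ∑ x ∈ s, x := by
  suffices h : ∀ n (s : Finset ℕ), s.card = n → ∑ k ∈ Finset.range n, k ≤ ∑ x ∈ s, x by
    exact h _ s rfl
  intro n
  induction n with
  | zero => simp
  | succ n ih =>
    intro s hn
    have hne : s.Nonempty := by rw [← Finset.card_pos, hn]; omega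
    set m := s.max' hne with hm
    have hms : m ∈ s := s.max'_mem hne
    have hcard : (s.erase m).card = n := by rw [Finset.card_erase_of_mem hms, hn]; omega
    have hsub : s ⊆ Finset.range (m + 1) := by
      intro x hx
      simp only [Finset.mem_range]
      exact Nat.lt_succ_of_le (s.le_max' x hx)
    have hmn : n ≤ m := by
      have := Finset.card_le_card hsub
      rw [hn, Finset.card_range] at this; omega
    calc ∑ k ∈ Finset.range (n+1), k = (∑ k ∈ Finset.range n, k) + n := by
          rw [Finset.sum_range_succ]
      _ ≤ (∑ x ∈ s.erase m, x) + m := Nat.add_le_add (ih _ hcard) hmn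
      _ = ∑ x ∈ s, x := by rw [add_comm]; exact Finset.add_sum_erase s (fun x => x) hms

/-- The residue class of `i` mod `t` inside `range n`, as an image. -/
lemma filter_mod_eq_image {t : ℕ} (ht : 0 < t) {i : ℕ} (hit : i < t) (n : ℕ) :
    (Finset.range n).filter (fun x => x % t = i)
      = (Finset.range ((n + t - 1 - i)/t)).image (fun m => i + m * t) := by
  ext x
  simp only [mem_filter, mem_range, mem_image]
  constructor
  · rintro ⟨hx, hmod⟩
    refine ⟨x / t, ?_, ?_⟩
    · rw [Nat.lt_iff_add_one_le, Nat.le_div_iff_mul_le ht]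
      have h1 : x % t + t * (x / t) = x := Nat.mod_add_div x t
      rw [hmod] at h1
      have h2 : (x / t + 1) * t = t * (x / t) + t := by ring
      rw [h2]
      omega
    · have h1 : x % t + t * (x / t) = x := Nat.mod_add_div x t
      rw [hmod] at h1
      rw [mul_comm]
      omega
  · rintro ⟨m, hm, rfl⟩
    rw [Nat.lt_iff_add_one_le, Nat.le_div_iff_mul_le ht] at hm
    have h2 : (m + 1) * t = m * t + t := by ring
    rw [h2] at hm
    constructor
    · omega
    · rw [Nat.add_mul_mod_self_right, Nat.mod_eq_of_lt hit]

lemma card_filter_mod {t : ℕ} (ht : 0 < t) {i : ℕ} (hit : i < t) (n : ℕ) :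
    ((Finset.range n).filter (fun x => x % t = i)).card = (n + t - 1 - i)/t := by
  rw [filter_mod_eq_image ht hit n, Finset.card_image_of_injective _ ?_, Finset.card_range]
  intro a b hab
  simp only at hab
  exact Nat.eq_of_mul_eq_mul_right ht (by omega)

lemma sum_filter_mod_image {t : ℕ} (ht : 0 < t) (i a : ℕ) :
    ∑ b ∈ (Finset.range a).image (fun m => i + m * t), b = a * i + a.choose 2 * t := by
  rw [Finset.sum_image ?inj]
  case inj =>
    intro a1 _ a2 _ h
    simp only at h
    exact Nat.eq_of_mul_eq_mul_right ht (by omega)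
  rw [Finset.sum_add_distrib, Finset.sum_const, Finset.card_range, ← Finset.sum_mul,
    Finset.sum_range_id, ← Nat.choose_two_right, smul_eq_mul]

lemma cnt_eq {t : ℕ} (ht : 0 < t) {i : ℕ} (hit : i < t) (n : ℕ) :
    (n + t - 1 - i) / t = n / t + if i < n % t then 1 else 0 := by
  have hmod : n % t + t * (n / t) = n := Nat.mod_add_div n t
  have hlt : n % t < t := Nat.mod_lt n ht
  set q := n / t with hq
  set ρ := n % t with hρ
  by_cases h : i < ρ
  · rw [if_pos h]
    apply Nat.div_eq_of_lt_le
    · calc (q + 1) * t = t * q + t := by ring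
        _ ≤ n + t - 1 - i := by omega
    · calc n + t - 1 - i < t * q + 2 * t := by omega
        _ = (q + 1 + 1) * t := by ring
  · rw [if_neg h, add_zero]
    apply Nat.div_eq_of_lt_le
    · calc q * t = t * q := by ring
        _ ≤ n + t - 1 - i := by omega
    · calc n + t - 1 - i < t * q + t := by omega
        _ = (q + 1) * t := by ring

lemma sum_i_cnt {t : ℕ} (ht : 0 < t) (n : ℕ) :
    ∑ i ∈ Finset.range t, ((n + t - 1 - i) / t) * i
      = (n / t) * t.choose 2 + (n % t).choose 2 := by
  have hlt : n % t < t := Nat.mod_lt n ht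
  calc ∑ i ∈ Finset.range t, ((n + t - 1 - i) / t) * i
      = ∑ i ∈ Finset.range t, ((n / t) * i + if i < n % t then i else 0) := by
        apply Finset.sum_congr rfl
        intro i hi
        rw [Finset.mem_range] at hi
        rw [cnt_eq ht hi n]
        by_cases h : i < n % t <;> simp [h] <;> ring
    _ = (n / t) * (∑ i ∈ Finset.range t, i) + ∑ i ∈ Finset.range (n % t), i := by
        rw [Finset.sum_add_distrib, Finset.mul_sum]
        congr 1
        rw [← Finset.sum_filter]
        congr 1
        ext x
        simp only [Finset.mem_filter, Finset.mem_range]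
        omega
    _ = (n / t) * t.choose 2 + (n % t).choose 2 := by
        rw [Finset.sum_range_id, Finset.sum_range_id, Nat.choose_two_right, Nat.choose_two_right]

/-! ### The beta-set bijection -/

/-- gap for strictly monotone maps out of `Fin r`. -/
lemma strictMono_gap {r : ℕ} {f : Fin r → ℕ} (hf : StrictMono f) (k j : Fin r)
    (h : (k : ℕ) ≤ j) : f k + ((j : ℕ) - (k : ℕ)) ≤ f j := by
  obtain ⟨d, hd⟩ : ∃ d, (j : ℕ) = (k : ℕ) + d := ⟨(j : ℕ) - k, by omega⟩
  have : ∀ d (k j : Fin r), (j : ℕ) = (k : ℕ) + d → f k + d ≤ f j := by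
    intro d
    induction d with
    | zero =>
      intro k j hkj
      have hkj' : k = j := Fin.ext (by omega)
      rw [hkj']
      omega
    | succ d ih =>
      intro k j hkj
      have hj' : (k : ℕ) + d < r := by omega
      have h1 := ih k ⟨(k : ℕ) + d, hj'⟩ rfl
      have h2 : f ⟨(k : ℕ) + d, hj'⟩ < f j := hf (by simp [Fin.lt_def]; omega)
      omega
  have := this d k j hd
  omega

/-- The increasing enumeration of the beta set. -/
lemma betaSet_eq_image_g {r : ℕ} (lam : Fin r → ℕ) :
    betaSet r lam = Finset.image (fun k : Fin r => lam (Fin.rev k) + (k : ℕ)) Finset.univ := by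
  unfold betaSet
  ext b
  simp only [Finset.mem_image, Finset.mem_univ, true_and]
  constructor
  · rintro ⟨i, rfl⟩
    exact ⟨Fin.rev i, by rw [Fin.rev_rev]; congr 1; rw [Fin.val_rev]; omega⟩
  · rintro ⟨k, rfl⟩
    refine ⟨Fin.rev k, ?_⟩
    congr 1
    rw [Fin.val_rev]
    omega

lemma g_strictMono {r s : ℕ} {lam : Fin r → ℕ} (h : IsRectPartition r s lam) :
    StrictMono (fun k : Fin r => lam (Fin.rev k) + (k : ℕ)) := by
  intro k j hkj
  simp only
  have h1 : Fin.rev j ≤ Fin.rev k := Fin.rev_le_rev.mpr (le_of_lt hkj)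
  have h2 : lam (Fin.rev k) ≤ lam (Fin.rev j) := h.1 _ _ h1
  have : (k : ℕ) < j := hkj
  omega

lemma betaSet_card {r s : ℕ} {lam : Fin r → ℕ} (h : IsRectPartition r s lam) :
    (betaSet r lam).card = r := by
  rw [betaSet_eq_image_g, Finset.card_image_of_injective _ (g_strictMono h).injective,
    Finset.card_univ, Fintype.card_fin]

lemma betaSet_subset_range {r s : ℕ} {lam : Fin r → ℕ}
    (h : IsRectPartition r s lam) : betaSet r lam ⊆ Finset.range (r + s) := by
  intro b hb
  unfold betaSet at hb
  simp only [Finset.mem_image, Finset.mem_univ, true_and] at hb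
  obtain ⟨i, rfl⟩ := hb
  have h1 := h.2 i
  have h2 : (i : ℕ) < r := i.isLt
  simp only [Finset.mem_range]
  omega

lemma betaSet_mem_powersetCard {r s : ℕ} {lam : Fin r → ℕ}
    (h : IsRectPartition r s lam) :
    betaSet r lam ∈ (Finset.range (r + s)).powersetCard r := by
  rw [Finset.mem_powersetCard]
  exact ⟨betaSet_subset_range h, betaSet_card h⟩

lemma betaSet_injOn {r s : ℕ} {lam1 lam2 : Fin r → ℕ} (h1 : IsRectPartition r s lam1)
    (h2 : IsRectPartition r s lam2) (heq : betaSet r lam1 = betaSet r lam2) : lam1 = lam2 := by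
  have hc : (betaSet r lam1).card = r := betaSet_card h1
  have e1 : (fun k : Fin r => lam1 (Fin.rev k) + (k : ℕ))
      = (betaSet r lam1).orderEmbOfFin hc := by
    apply Finset.orderEmbOfFin_unique hc ?_ (g_strictMono h1)
    intro x
    rw [betaSet_eq_image_g]
    exact Finset.mem_image_of_mem _ (Finset.mem_univ x)
  have e2 : (fun k : Fin r => lam2 (Fin.rev k) + (k : ℕ))
      = (betaSet r lam1).orderEmbOfFin hc := by
    apply Finset.orderEmbOfFin_unique hc ?_ (g_strictMono h2)
    intro x
    rw [heq, betaSet_eq_image_g]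
    exact Finset.mem_image_of_mem _ (Finset.mem_univ x)
  funext i
  have := congrFun (e1.trans e2.symm) (Fin.rev i)
  simp only [Fin.rev_rev] at this
  omega

lemma betaSet_surj {r s : ℕ} (hr : 1 ≤ r) (B : Finset ℕ)
    (hB : B ∈ (Finset.range (r + s)).powersetCard r) :
    ∃ lam : Fin r → ℕ, IsRectPartition r s lam ∧ betaSet r lam = B := by
  rw [Finset.mem_powersetCard] at hB
  obtain ⟨hBsub, hBcard⟩ := hB
  set e := B.orderEmbOfFin hBcard with he
  have hes : StrictMono e := (B.orderEmbOfFin hBcard).strictMono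
  have hmem : ∀ k : Fin r, e k ∈ B := fun k => Finset.orderEmbOfFin_mem B hBcard k
  have hlt : ∀ k : Fin r, e k < r + s := by
    intro k
    have := hBsub (hmem k)
    simpa using this
  have hge : ∀ k : Fin r, (k : ℕ) ≤ e k := by
    intro k
    have h0 : (0 : ℕ) < r := hr
    have hgap := strictMono_gap hes ⟨0, h0⟩ k (by simp)
    have h00 : ((⟨0, h0⟩ : Fin r) : ℕ) = 0 := rfl
    omega
  have hub : ∀ k : Fin r, e k + (r - 1 - (k : ℕ)) < r + s := by
    intro k
    have hlast : (r - 1 : ℕ) < r := by omega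
    have hk1 : (k : ℕ) < r := k.isLt
    have hgap := strictMono_gap hes k ⟨r - 1, hlast⟩ (by simp; omega)
    have hl := hlt ⟨r - 1, hlast⟩
    have h00 : ((⟨r - 1, hlast⟩ : Fin r) : ℕ) = r - 1 := rfl
    omega
  refine ⟨fun i => e (Fin.rev i) - (Fin.rev i : ℕ), ⟨?_, ?_⟩, ?_⟩
  · intro i j hij
    have hrev : (Fin.rev j : ℕ) ≤ (Fin.rev i : ℕ) := by
      rw [Fin.val_rev, Fin.val_rev]
      have : (i : ℕ) ≤ j := hij
      have : (i : ℕ) < r := i.isLt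
      have : (j : ℕ) < r := j.isLt
      omega
    show e (Fin.rev j) - (Fin.rev j : ℕ) ≤ e (Fin.rev i) - (Fin.rev i : ℕ)
    have hgap := strictMono_gap hes (Fin.rev j) (Fin.rev i) hrev
    have hge' := hge (Fin.rev j)
    omega
  · intro i
    show e (Fin.rev i) - (Fin.rev i : ℕ) ≤ s
    have h1 := hub (Fin.rev i)
    have h2 : (Fin.rev i : ℕ) = r - ((i : ℕ) + 1) := Fin.val_rev i
    have h3 : (i : ℕ) < r := i.isLt
    omega
  · rw [betaSet_eq_image_g]
    have himg : Finset.image (fun k : Fin r =>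
        (e (Fin.rev (Fin.rev k)) - (Fin.rev (Fin.rev k) : ℕ)) + (k : ℕ)) Finset.univ
        = Finset.image (fun k : Fin r => (e k : ℕ)) Finset.univ := by
      apply Finset.image_congr
      intro k _
      simp only [Fin.rev_rev]
      have := hge k
      omega
    rw [himg]
    apply Finset.eq_of_subset_of_card_le
    · intro x hx
      simp only [Finset.mem_image, Finset.mem_univ, true_and] at hx
      obtain ⟨k, rfl⟩ := hx
      exact hmem k
    · rw [hBcard, Finset.card_image_of_injective _ hes.injective, Finset.card_univ,
        Fintype.card_fin]

/-! ### Counts and justifications for abstract beta-sets -/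

def aB (t : ℕ) (B : Finset ℕ) (i : ℕ) : ℕ := (B.filter fun b => b % t = i).card

def JB (t : ℕ) (B : Finset ℕ) : Finset ℕ :=
  (Finset.range t).biUnion fun i => (Finset.range (aB t B i)).image fun m => i + m * t

lemma JB_pairwise (t : ℕ) (B : Finset ℕ) :
    (↑(Finset.range t) : Set ℕ).PairwiseDisjoint
      (fun i => (Finset.range (aB t B i)).image fun m => i + m * t) := by
  intro i hi j hj hij
  simp only [Finset.coe_range, Set.mem_Iio] at hi hj
  apply Finset.disjoint_left.mpr
  intro x hxi hxj
  simp only [Finset.mem_image, Finset.mem_range] at hxi hxj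
  obtain ⟨m1, _, h1⟩ := hxi
  obtain ⟨m2, _, h2⟩ := hxj
  apply hij
  have e1 : x % t = i := by rw [← h1, Nat.add_mul_mod_self_right, Nat.mod_eq_of_lt hi]
  have e2 : x % t = j := by rw [← h2, Nat.add_mul_mod_self_right, Nat.mod_eq_of_lt hj]
  omega

lemma sum_JB {t : ℕ} (ht : 0 < t) (B : Finset ℕ) :
    ∑ b ∈ JB t B, b = ∑ i ∈ Finset.range t, (aB t B i * i + (aB t B i).choose 2 * t) := by
  unfold JB
  rw [Finset.sum_biUnion (JB_pairwise t B)]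
  exact Finset.sum_congr rfl fun i _ => sum_filter_mod_image ht i (aB t B i)

lemma card_JB {t : ℕ} (ht : 0 < t) (B : Finset ℕ) :
    (JB t B).card = ∑ i ∈ Finset.range t, aB t B i := by
  unfold JB
  rw [Finset.card_biUnion]
  · apply Finset.sum_congr rfl
    intro i _
    rw [Finset.card_image_of_injective _ ?_, Finset.card_range]
    intro a b hab
    simp only at hab
    exact Nat.eq_of_mul_eq_mul_right ht (by omega)
  · intro i hi j hj hij
    exact JB_pairwise t B (by simpa using hi) (by simpa using hj) hij

lemma sum_aB {t : ℕ} (ht : 0 < t) (B : Finset ℕ) :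
    ∑ i ∈ Finset.range t, aB t B i = B.card := by
  unfold aB
  rw [eq_comm]
  apply Finset.card_eq_sum_card_fiberwise
  intro x _
  simp only [Finset.coe_range, Set.mem_Iio]
  exact Nat.mod_lt x ht

lemma justification_eq_JB (r t : ℕ) (lam : Fin r → ℕ) :
    justification r t lam = JB t (betaSet r lam) := rfl

lemma sum_JB_ge {t : ℕ} (ht : 0 < t) {r : ℕ} (B : Finset ℕ) (hB : B.card = r) :
    r * (r - 1) / 2 ≤ ∑ b ∈ JB t B, b := by
  have h1 : (JB t B).card = r := by rw [card_JB ht, sum_aB ht, hB]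
  have h2 := sum_range_card_le_sum (JB t B)
  rw [h1, Finset.sum_range_id] at h2
  exact h2

/-! ### The main theorem -/

/-- The average size of the `t`-core of a uniformly random partition in
`Par_{r,s}` equals `(rs/((r+s)(r+s−1))) (C((r+s) mod t, 2) + ⌊(r+s)/t⌋ C(t,2))`. -/
theorem expected_core_size (r s t : ℕ) (hr : 1 ≤ r) (hs : 1 ≤ s) (ht : 2 ≤ t) :
    (1 / ((r + s).choose r : ℚ)) *
        ∑ᶠ lam ∈ {lam : Fin r → ℕ | IsRectPartition r s lam}, (coreSize r t lam : ℚ) =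
      ((r : ℚ) * (s : ℚ) / (((r : ℚ) + (s : ℚ)) * ((r : ℚ) + (s : ℚ) - 1))) *
        ((((r + s) % t).choose 2 : ℚ) + ((r + s) / t : ℕ) * (t.choose 2 : ℚ)) := by
  have ht0 : 0 < t := by omega
  set n := r + s with hn
  have hn2 : 2 ≤ n := by omega
  -- finiteness of the set of rectangular partitions
  have hfin : {lam : Fin r → ℕ | IsRectPartition r s lam}.Finite := by
    apply Set.Finite.subset (Set.Finite.pi (fun _ : Fin r => Set.finite_Iic s))
    intro lam hlam
    intro i _
    exact hlam.2 i
  rw [finsum_mem_eq_finite_toFinset_sum _ hfin]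
  -- transport the sum to the sum over r-subsets of range n
  have hbij : ∑ lam ∈ hfin.toFinset, (coreSize r t lam : ℚ)
      = ∑ B ∈ (Finset.range n).powersetCard r,
          (((∑ b ∈ JB t B, b) - r * (r - 1) / 2 : ℕ) : ℚ) := by
    apply Finset.sum_bij (fun lam _ => betaSet r lam)
    · intro lam hlam
      rw [Set.Finite.mem_toFinset] at hlam
      exact betaSet_mem_powersetCard hlam
    · intro l1 h1 l2 h2 h
      rw [Set.Finite.mem_toFinset] at h1 h2
      exact betaSet_injOn h1 h2 h
    · intro B hB
      obtain ⟨lam, hl, hbe⟩ := betaSet_surj hr B hB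
      exact ⟨lam, Set.Finite.mem_toFinset hfin |>.mpr hl, hbe⟩
    · intro lam _
      rw [coreSize, justification_eq_JB]
  rw [hbij]
  -- cast each term
  have hterm : ∀ B ∈ (Finset.range n).powersetCard r,
      (((∑ b ∈ JB t B, b) - r * (r - 1) / 2 : ℕ) : ℚ)
        = ((∑ b ∈ JB t B, b : ℕ) : ℚ) - (r.choose 2 : ℚ) := by
    intro B hB
    rw [Finset.mem_powersetCard] at hB
    rw [Nat.cast_sub (sum_JB_ge ht0 B hB.2), Nat.choose_two_right]
  rw [Finset.sum_congr rfl hterm, Finset.sum_sub_distrib, Finset.sum_const,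
    Finset.card_powersetCard, Finset.card_range]
  -- notation
  set N := n.choose r with hN
  set K1 := (n - 1).choose (r - 1) with hK1
  set M2 := if 2 ≤ r then (n - 2).choose (r - 2) else 0 with hM2
  set S1 := ∑ i ∈ Finset.range t, ((n + t - 1 - i) / t) * i with hS1
  set SC2 := ∑ i ∈ Finset.range t, ((n + t - 1 - i) / t).choose 2 with hSC2
  -- the residue classes
  have hTcard : ∀ i, i < t →
      ((Finset.range n).filter (fun x => x % t = i)).card = (n + t - 1 - i) / t :=
    fun i hi => card_filter_mod ht0 hi n
  -- first moment
  have hA : ∀ i, i < t → ∑ B ∈ (Finset.range n).powersetCard r, aB t B i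
      = ((n + t - 1 - i) / t) * K1 := by
    intro i hi
    have step : ∀ B ∈ (Finset.range n).powersetCard r,
        aB t B i = ((B ∩ ((Finset.range n).filter (fun x => x % t = i))).card).choose 1 := by
      intro B hB
      rw [Finset.mem_powersetCard] at hB
      rw [Nat.choose_one_right]
      unfold aB
      congr 1
      ext x
      simp only [Finset.mem_filter, Finset.mem_inter, Finset.mem_range]
      constructor
      · intro hx
        exact ⟨hx.1, ⟨by simpa using hB.1 hx.1, hx.2⟩⟩
      · intro hx
        exact ⟨hx.1, hx.2.2⟩
    rw [Finset.sum_congr rfl step,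
      sum_choose_card_inter _ _ (Finset.filter_subset _ _) r 1 hr,
      hTcard i hi, Nat.choose_one_right, Finset.card_range]
  -- second moment
  have hA2 : ∀ i, i < t → ∑ B ∈ (Finset.range n).powersetCard r, (aB t B i).choose 2
      = ((n + t - 1 - i) / t).choose 2 * M2 := by
    intro i hi
    by_cases h2r : 2 ≤ r
    · have step : ∀ B ∈ (Finset.range n).powersetCard r,
          (aB t B i).choose 2
            = ((B ∩ ((Finset.range n).filter (fun x => x % t = i))).card).choose 2 := by
        intro B hB
        rw [Finset.mem_powersetCard] at hB
        congr 1
        unfold aB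
        congr 1
        ext x
        simp only [Finset.mem_filter, Finset.mem_inter, Finset.mem_range]
        constructor
        · intro hx
          exact ⟨hx.1, ⟨by simpa using hB.1 hx.1, hx.2⟩⟩
        · intro hx
          exact ⟨hx.1, hx.2.2⟩
      rw [Finset.sum_congr rfl step,
        sum_choose_card_inter _ _ (Finset.filter_subset _ _) r 2 h2r,
        hTcard i hi, Finset.card_range, hM2, if_pos h2r]
    · have hr1 : r = 1 := by omega
      have step : ∀ B ∈ (Finset.range n).powersetCard r, (aB t B i).choose 2 = 0 := by
        intro B hB
        rw [Finset.mem_powersetCard] at hB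
        have : aB t B i ≤ B.card := Finset.card_filter_le _ _
        rw [hB.2, hr1] at this
        interval_cases h : aB t B i <;> simp
      rw [Finset.sum_congr rfl step, Finset.sum_const, smul_eq_mul, mul_zero, hM2, if_neg h2r,
        mul_zero]
  -- total sum of justified beta-sets
  have hTotal : ∑ B ∈ (Finset.range n).powersetCard r, ((∑ b ∈ JB t B, b : ℕ) : ℚ)
      = (S1 : ℚ) * K1 + (SC2 : ℚ) * M2 * t := by
    have hNat : ∑ B ∈ (Finset.range n).powersetCard r, (∑ b ∈ JB t B, b)
        = S1 * K1 + SC2 * M2 * t := by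
      calc ∑ B ∈ (Finset.range n).powersetCard r, (∑ b ∈ JB t B, b)
          = ∑ B ∈ (Finset.range n).powersetCard r,
              ∑ i ∈ Finset.range t, (aB t B i * i + (aB t B i).choose 2 * t) := by
            exact Finset.sum_congr rfl fun B _ => sum_JB ht0 B
        _ = ∑ i ∈ Finset.range t, ∑ B ∈ (Finset.range n).powersetCard r,
              (aB t B i * i + (aB t B i).choose 2 * t) := Finset.sum_comm
        _ = ∑ i ∈ Finset.range t,
              (((n + t - 1 - i) / t) * K1 * i + ((n + t - 1 - i) / t).choose 2 * M2 * t) := by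
            apply Finset.sum_congr rfl
            intro i hi
            rw [Finset.mem_range] at hi
            rw [Finset.sum_add_distrib, ← Finset.sum_mul, ← Finset.sum_mul, hA i hi, hA2 i hi]
        _ = S1 * K1 + SC2 * M2 * t := by
            rw [Finset.sum_add_distrib]
            congr 1
            · rw [hS1, Finset.sum_mul]
              apply Finset.sum_congr rfl
              intro i _
              ring
            · rw [hSC2, Finset.sum_mul, Finset.sum_mul]
    rw [← Nat.cast_sum, hNat]
    push_cast
    ring
  rw [hTotal]
  -- arithmetic identities
  have hc1 : (K1 : ℚ) * n = (N : ℚ) * r := by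
    have h := Nat.add_one_mul_choose_eq (n - 1) (r - 1)
    have e1 : n - 1 + 1 = n := by omega
    have e2 : r - 1 + 1 = r := by omega
    rw [e1, e2] at h
    have hnat : K1 * n = N * r := by rw [hK1, hN, mul_comm]; rw [h, mul_comm]
    exact_mod_cast hnat
  have hc2 : (M2 : ℚ) * (n * (n - 1)) = (N : ℚ) * (r * (r - 1)) := by
    by_cases h2r : 2 ≤ r
    · have hnat : M2 * (n * (n - 1)) = N * (r * (r - 1)) := by
        have t1 := Nat.add_one_mul_choose_eq (n - 2) (r - 2)
        have e1 : n - 2 + 1 = n - 1 := by omega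
        have e2 : r - 2 + 1 = r - 1 := by omega
        rw [e1, e2] at t1
        have t2 := Nat.add_one_mul_choose_eq (n - 1) (r - 1)
        have e3 : n - 1 + 1 = n := by omega
        have e4 : r - 1 + 1 = r := by omega
        rw [e3, e4] at t2
        rw [hM2, if_pos h2r]
        calc (n - 2).choose (r - 2) * (n * (n - 1))
            = n * ((n - 1) * (n - 2).choose (r - 2)) := by ring
          _ = n * ((n - 1).choose (r - 1) * (r - 1)) := by rw [t1]
          _ = (n * (n - 1).choose (r - 1)) * (r - 1) := by ring
          _ = (n.choose r * r) * (r - 1) := by rw [t2]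
          _ = N * (r * (r - 1)) := by rw [hN]; ring
      have hcast := congrArg (Nat.cast (R := ℚ)) hnat
      push_cast at hcast
      have er : ((r : ℚ) - 1) = ((r - 1 : ℕ) : ℚ) := by
        rw [Nat.cast_sub (by omega)]; norm_num
      have en : ((n : ℚ) - 1) = ((n - 1 : ℕ) : ℚ) := by
        rw [Nat.cast_sub (by omega)]; norm_num
      rw [er, en]
      exact_mod_cast hnat
    · have hr1 : r = 1 := by omega
      rw [hM2, if_neg h2r, hr1]
      norm_num
  have hc3 : (S1 : ℚ) = ((n / t : ℕ) : ℚ) * (t.choose 2 : ℚ) + ((n % t).choose 2 : ℚ) := by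
    rw [hS1]
    exact_mod_cast congrArg (Nat.cast (R := ℚ)) (sum_i_cnt ht0 n)
  have hc4 : (S1 : ℚ) + (SC2 : ℚ) * t = (n.choose 2 : ℚ) := by
    have hnat : S1 + SC2 * t = n.choose 2 := by
      have hfib : ∑ x ∈ Finset.range n, x
          = ∑ i ∈ Finset.range t, ∑ x ∈ (Finset.range n).filter (fun x => x % t = i), x := by
        rw [eq_comm]
        apply Finset.sum_fiberwise_of_maps_to
        intro x _
        simp only [Finset.mem_range]
        exact Nat.mod_lt x ht0
      have hsum : ∑ x ∈ Finset.range n, x = S1 + SC2 * t := by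
        rw [hfib]
        have : ∀ i ∈ Finset.range t,
            ∑ x ∈ (Finset.range n).filter (fun x => x % t = i), x
              = ((n + t - 1 - i) / t) * i + ((n + t - 1 - i) / t).choose 2 * t := by
          intro i hi
          rw [Finset.mem_range] at hi
          rw [filter_mod_eq_image ht0 hi n, sum_filter_mod_image ht0]
        rw [Finset.sum_congr rfl this, Finset.sum_add_distrib, hS1, hSC2, Finset.sum_mul]
      rw [← hsum, Finset.sum_range_id, Nat.choose_two_right]
    exact_mod_cast congrArg (Nat.cast (R := ℚ)) hnat
  -- final rational arithmetic
  have hN0 : (N : ℚ) ≠ 0 := by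
    have h : 0 < N := Nat.choose_pos (show r ≤ n by omega)
    exact_mod_cast h.ne'
  have hn0 : (n : ℚ) ≠ 0 := by exact_mod_cast (show n ≠ 0 by omega)
  have h2n : (2 : ℚ) ≤ (n : ℚ) := by exact_mod_cast hn2
  have hn1 : (n : ℚ) - 1 ≠ 0 := by intro h; linarith
  have htq : (t : ℚ) ≠ 0 := by exact_mod_cast (show t ≠ 0 by omega)
  have hk : (K1 : ℚ) = (N : ℚ) * r / n := by rw [eq_div_iff hn0]; exact hc1
  have hm : (M2 : ℚ) = (N : ℚ) * ((r : ℚ) * ((r : ℚ) - 1)) / ((n : ℚ) * ((n : ℚ) - 1)) := by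
    rw [eq_div_iff (mul_ne_zero hn0 hn1)]; exact hc2
  have hnc : ((n.choose 2 : ℕ) : ℚ) = (n : ℚ) * ((n : ℚ) - 1) / 2 := Nat.cast_choose_two (K := ℚ) n
  rw [hnc] at hc4
  have hcq : (SC2 : ℚ) = ((n : ℚ) * ((n : ℚ) - 1) / 2 - (S1 : ℚ)) / t := by
    rw [eq_div_iff htq]; linarith
  have hS1' : (((n % t).choose 2 : ℕ) : ℚ) + ((n / t : ℕ) : ℚ) * ((t.choose 2 : ℕ) : ℚ)
      = (S1 : ℚ) := by rw [hc3]; ring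
  have hrs0 : (r : ℚ) + (s : ℚ) ≠ 0 := by positivity
  have hnq : (n : ℚ) = (r : ℚ) + (s : ℚ) := by rw [hn]; push_cast; ring
  have hrs1 : (r : ℚ) + (s : ℚ) - 1 ≠ 0 := by rw [← hnq]; exact hn1
  rw [hS1', nsmul_eq_mul, Nat.cast_choose_two (K := ℚ) r, hk, hm, hcq, hnq]
  field_simp
  ring
end

section
/- Fix an integer t ≥ 2 and positive integers r, s both divisible by t. Then (1/C(r+s,r)) · Σ_{λ ∈ Par_{r,s}} |core_t(λ)| = ((t−1)/2) · rs/(r+s−1). -/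
open Finset

lemma fin_strictMono_le {r : ℕ} {f : Fin r → ℕ} (hf : StrictMono f) (k : Fin r) :
    (k : ℕ) ≤ f k := by
  obtain ⟨k, hk⟩ := k
  induction k with
  | zero => exact Nat.zero_le _
  | succ m ih =>
    have hm : m < r := by omega
    have h1 : f ⟨m, hm⟩ < f ⟨m + 1, hk⟩ := hf (by simp [Fin.lt_def])
    have h2 := ih hm
    simp only at h2 ⊢
    omega

lemma fin_strictMono_diff {r : ℕ} {f : Fin r → ℕ} (hf : StrictMono f) (a b : Fin r)
    (hab : (a : ℕ) ≤ (b : ℕ)) : (b : ℕ) - (a : ℕ) + f a ≤ f b := by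
  obtain ⟨k, hk⟩ := b
  induction k with
  | zero =>
    have ha : a = ⟨0, hk⟩ := Fin.ext (by simpa using hab)
    simp [ha]
  | succ m ih =>
    have hm : m < r := by omega
    rcases Nat.lt_or_ge (a : ℕ) (m + 1) with hlt | hgea
    · have h1 := ih hm (by simp at hab hlt ⊢; omega)
      have h2 : f ⟨m, hm⟩ < f ⟨m + 1, hk⟩ := hf (by simp [Fin.lt_def])
      simp only at h1 ⊢
      omega
    · have ha : a = ⟨m + 1, hk⟩ := Fin.ext (by simp at hab ⊢; omega)
      simp [ha]

noncomputable def invLam (r : ℕ) (B : Finset ℕ) : Fin r → ℕ := fun i =>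
  if h : B.card = r then
    B.orderEmbOfFin h ⟨r - 1 - (i : ℕ), by have := i.isLt; omega⟩ - (r - 1 - (i : ℕ))
  else 0

/-- the strictly increasing enumeration of the beta set of a partition -/
lemma betaSet_eq_image {r s : ℕ} {lam : Fin r → ℕ} (h : IsRectPartition r s lam) :
    betaSet r lam =
      Finset.image (fun k : Fin r => lam ⟨r - 1 - (k : ℕ), by have := k.isLt; omega⟩ + (k : ℕ))
        Finset.univ := by
  unfold betaSet
  ext x
  simp only [mem_image, mem_univ, true_and]
  constructor
  · rintro ⟨i, rfl⟩
    refine ⟨⟨r - 1 - (i : ℕ), by have := i.isLt; omega⟩, ?_⟩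
    have hi := i.isLt
    congr 1
    · congr 1
      exact Fin.ext (by simp; omega)
  · rintro ⟨k, rfl⟩
    have hk := k.isLt
    exact ⟨⟨r - 1 - (k : ℕ), by omega⟩, by congr 1; simp; omega⟩

lemma enum_strictMono {r s : ℕ} {lam : Fin r → ℕ} (h : IsRectPartition r s lam) :
    StrictMono (fun k : Fin r =>
      lam ⟨r - 1 - (k : ℕ), by have := k.isLt; omega⟩ + (k : ℕ)) := by
  intro a b hab
  have hb := b.isLt
  have hab' : (a : ℕ) < (b : ℕ) := hab
  have hle : lam ⟨r - 1 - (a : ℕ), by have := a.isLt; omega⟩ ≤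
      lam ⟨r - 1 - (b : ℕ), by omega⟩ := by
    apply h.1
    simp only [Fin.mk_le_mk]
    omega
  simp only
  omega

lemma invLam_betaSet {r s : ℕ} {lam : Fin r → ℕ} (h : IsRectPartition r s lam) :
    invLam r (betaSet r lam) = lam := by
  funext i
  have hc := betaSet_card h
  unfold invLam
  rw [dif_pos hc]
  have hu := Finset.orderEmbOfFin_unique (f := fun k : Fin r =>
      lam ⟨r - 1 - (k : ℕ), by have := k.isLt; omega⟩ + (k : ℕ)) hc
      (fun x => by rw [betaSet_eq_image h]; exact Finset.mem_image_of_mem _ (mem_univ x))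
      (enum_strictMono h)
  rw [← congrFun hu ⟨r - 1 - (i : ℕ), by have := i.isLt; omega⟩]
  have hi := i.isLt
  simp only
  have : (⟨r - 1 - (r - 1 - (i : ℕ)), by omega⟩ : Fin r) = i := Fin.ext (by simp; omega)
  rw [this]
  omega

lemma betaSet_invLam {r s : ℕ} {B : Finset ℕ}
    (hB : B ∈ (Finset.range (r + s)).powersetCard r) (hr : 1 ≤ r) :
    betaSet r (invLam r B) = B := by
  rw [Finset.mem_powersetCard] at hB
  obtain ⟨hBsub, hc⟩ := hB
  have key : ∀ i : Fin r, invLam r B i + (r - 1 - (i : ℕ)) =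
      B.orderEmbOfFin hc ⟨r - 1 - (i : ℕ), by have := i.isLt; omega⟩ := by
    intro i
    unfold invLam
    rw [dif_pos hc]
    have hge := fin_strictMono_le (B.orderEmbOfFin hc).strictMono
      ⟨r - 1 - (i : ℕ), by have := i.isLt; omega⟩
    simp only at hge
    omega
  apply Finset.eq_of_subset_of_card_le
  · intro x hx
    simp only [betaSet, mem_image, mem_univ, true_and] at hx
    obtain ⟨i, rfl⟩ := hx
    rw [key i]
    exact Finset.orderEmbOfFin_mem _ _ _
  · unfold betaSet
    have : ∀ y ∈ B, y ∈ Finset.image (fun i : Fin r => invLam r B i + (r - 1 - (i : ℕ)))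
        Finset.univ := by
      intro y hy
      have hy2 : y ∈ Set.range ⇑(B.orderEmbOfFin hc) := by
        rw [Finset.range_orderEmbOfFin B hc]; exact hy
      obtain ⟨k, hk⟩ := hy2
      have hkr := k.isLt
      refine Finset.mem_image.2 ⟨⟨r - 1 - (k : ℕ), by omega⟩, mem_univ _, ?_⟩
      rw [key ⟨r - 1 - (k : ℕ), by omega⟩, ← hk]
      congr 1
      exact Fin.ext (by simp; omega)
    exact Finset.card_le_card fun y hy => this y hy

lemma isRectPartition_invLam {r s : ℕ} {B : Finset ℕ}
    (hB : B ∈ (Finset.range (r + s)).powersetCard r) (hr : 1 ≤ r) :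
    IsRectPartition r s (invLam r B) := by
  rw [Finset.mem_powersetCard] at hB
  obtain ⟨hBsub, hc⟩ := hB
  have hmem : ∀ k : Fin r, B.orderEmbOfFin hc k < r + s := by
    intro k
    have := hBsub (Finset.orderEmbOfFin_mem B hc k)
    simpa [Finset.mem_range] using this
  have hub : ∀ k : Fin r, B.orderEmbOfFin hc k ≤ s + (k : ℕ) := by
    -- via reversed strictly mono function
    intro k
    have hrev : StrictMono (fun j : Fin r =>
        r + s - 1 - B.orderEmbOfFin hc ⟨r - 1 - (j : ℕ), by have := j.isLt; omega⟩) := by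
      intro a b hab
      have hab' : (a : ℕ) < (b : ℕ) := hab
      have hb := b.isLt
      have hlt : B.orderEmbOfFin hc ⟨r - 1 - (b : ℕ), by omega⟩ <
          B.orderEmbOfFin hc ⟨r - 1 - (a : ℕ), by have := a.isLt; omega⟩ := by
        apply (B.orderEmbOfFin hc).strictMono
        simp only [Fin.mk_lt_mk]
        omega
      have h1 := hmem ⟨r - 1 - (a : ℕ), by have := a.isLt; omega⟩
      simp only
      omega
    have hk := k.isLt
    have := fin_strictMono_le hrev ⟨r - 1 - (k : ℕ), by omega⟩
    simp only at this
    have heq : (⟨r - 1 - (r - 1 - (k : ℕ)), by omega⟩ : Fin r) = k := Fin.ext (by simp; omega)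
    rw [heq] at this
    have := hmem k
    omega
  have hval : ∀ i : Fin r, invLam r B i =
      B.orderEmbOfFin hc ⟨r - 1 - (i : ℕ), by have := i.isLt; omega⟩ - (r - 1 - (i : ℕ)) := by
    intro i
    unfold invLam
    rw [dif_pos hc]
  constructor
  · intro i j hij
    have hij' : (i : ℕ) ≤ (j : ℕ) := hij
    have hj := j.isLt
    rw [hval i, hval j]
    rcases eq_or_lt_of_le hij' with heq | hlt
    · simp [Fin.ext (heq : (i:ℕ) = j)]
    · have hdiff := fin_strictMono_diff (B.orderEmbOfFin hc).strictMono
        ⟨r - 1 - (j : ℕ), by omega⟩ ⟨r - 1 - (i : ℕ), by have := i.isLt; omega⟩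
        (by simp; omega)
      have hge := fin_strictMono_le (B.orderEmbOfFin hc).strictMono
        ⟨r - 1 - (j : ℕ), by omega⟩
      simp only at hdiff hge ⊢
      omega
  · intro i
    rw [hval i]
    have := hub ⟨r - 1 - (i : ℕ), by have := i.isLt; omega⟩
    simp only at this
    omega

def sAC (t : ℕ) (B : Finset ℕ) (i : ℕ) : ℕ := (B.filter fun b => b % t = i).card

def sJust (t : ℕ) (B : Finset ℕ) : Finset ℕ :=
  (Finset.range t).biUnion fun i => (Finset.range (sAC t B i)).image fun m => i + m * t

lemma sJust_disj {t : ℕ} (B : Finset ℕ) :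
    Set.PairwiseDisjoint ↑(Finset.range t)
      (fun i => (Finset.range (sAC t B i)).image fun m => i + m * t) := by
  intro i hi j hj hij
  simp only [Finset.coe_range, Set.mem_Iio] at hi hj
  apply Finset.disjoint_left.2
  intro x hx hy
  simp only [Finset.mem_image, Finset.mem_range] at hx hy
  obtain ⟨m, _, rfl⟩ := hx
  obtain ⟨m', _, he⟩ := hy
  apply hij
  have h1 : (i + m * t) % t = i := by
    rw [Nat.add_mul_mod_self_right, Nat.mod_eq_of_lt hi]
  have h2 : (j + m' * t) % t = j := by
    rw [Nat.add_mul_mod_self_right, Nat.mod_eq_of_lt hj]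
  rw [← h1, ← he, h2]

lemma sum_sJust (t : ℕ) (ht : 1 ≤ t) (B : Finset ℕ) :
    ∑ b ∈ sJust t B, b =
      ∑ i ∈ Finset.range t, (sAC t B i * i + t * ∑ m ∈ Finset.range (sAC t B i), m) := by
  unfold sJust
  rw [Finset.sum_biUnion (sJust_disj B)]
  apply Finset.sum_congr rfl
  intro i hi
  rw [Finset.sum_image]
  · rw [Finset.sum_add_distrib, Finset.sum_const, Finset.card_range, smul_eq_mul,
      ← Finset.sum_mul, mul_comm (∑ m ∈ Finset.range (sAC t B i), m) t]
  · intro x _ y _ hxy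
    simp only at hxy
    have : x * t = y * t := by omega
    exact Nat.eq_of_mul_eq_mul_right ht this

lemma card_sJust (t : ℕ) (ht : 1 ≤ t) (B : Finset ℕ) :
    (sJust t B).card = B.card := by
  unfold sJust
  rw [Finset.card_biUnion]
  · have h1 : ∀ i ∈ Finset.range t,
        ((Finset.range (sAC t B i)).image fun m => i + m * t).card = sAC t B i := by
      intro i _
      rw [Finset.card_image_of_injective, Finset.card_range]
      intro x y hxy
      simp only at hxy
      have : x * t = y * t := by omega
      exact Nat.eq_of_mul_eq_mul_right ht this
    rw [Finset.sum_congr rfl h1]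
    exact (Finset.card_eq_sum_card_fiberwise fun x _ =>
      Finset.mem_range.2 (Nat.mod_lt x ht)).symm
  · exact fun i hi j hj hij => sJust_disj B hi hj hij

lemma sum_finset_ge (J : Finset ℕ) : ∑ k ∈ Finset.range J.card, k ≤ ∑ b ∈ J, b := by
  have himg : Finset.image (J.orderEmbOfFin rfl) Finset.univ = J := by
    apply Finset.eq_of_subset_of_card_le
    · intro x hx
      simp only [Finset.mem_image, Finset.mem_univ, true_and] at hx
      obtain ⟨k, rfl⟩ := hx
      exact Finset.orderEmbOfFin_mem _ _ _
    · rw [Finset.card_image_of_injective _ (J.orderEmbOfFin rfl).injective]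
      simp
  calc ∑ k ∈ Finset.range J.card, k = ∑ k : Fin J.card, (k : ℕ) :=
        (Fin.sum_univ_eq_sum_range _ _).symm
    _ ≤ ∑ k : Fin J.card, J.orderEmbOfFin rfl k :=
        Finset.sum_le_sum fun k _ => fin_strictMono_le (J.orderEmbOfFin rfl).strictMono k
    _ = ∑ b ∈ J, b := by
        conv_rhs => rw [← himg]
        exact (Finset.sum_image (g := ⇑(J.orderEmbOfFin rfl)) (f := fun b => b)
          fun x _ y _ h => (J.orderEmbOfFin rfl).injective h).symm

lemma count_contains (U A : Finset ℕ) (r : ℕ) (hA : A ⊆ U) (hcard : A.card ≤ r) :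
    ((U.powersetCard r).filter fun B => A ⊆ B).card =
      (U.card - A.card).choose (r - A.card) := by
  rw [← Finset.card_sdiff_of_subset hA, ← Finset.card_powersetCard (r - A.card) (U \ A)]
  apply Finset.card_bij' (fun B _ => B \ A) (fun C _ => C ∪ A)
  · intro B hB
    simp only [Finset.mem_filter, Finset.mem_powersetCard] at hB
    obtain ⟨⟨hBU, hBc⟩, hAB⟩ := hB
    rw [Finset.mem_powersetCard]
    constructor
    · exact Finset.sdiff_subset_sdiff hBU (le_refl _)
    · rw [Finset.card_sdiff_of_subset hAB, hBc]
  · intro C hC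
    rw [Finset.mem_powersetCard] at hC
    obtain ⟨hCU, hCc⟩ := hC
    have hdisj : Disjoint C A := Finset.disjoint_of_subset_left hCU Finset.sdiff_disjoint
    rw [Finset.mem_filter, Finset.mem_powersetCard]
    refine ⟨⟨?_, ?_⟩, Finset.subset_union_right⟩
    · exact Finset.union_subset (hCU.trans Finset.sdiff_subset) hA
    · rw [Finset.card_union_of_disjoint hdisj, hCc]
      omega
  · intro B hB
    simp only [Finset.mem_filter] at hB
    exact Finset.sdiff_union_of_subset hB.2
  · intro C hC
    rw [Finset.mem_powersetCard] at hC
    have hdisj : Disjoint C A := Finset.disjoint_of_subset_left hC.1 Finset.sdiff_disjoint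
    rw [Finset.union_sdiff_right, Finset.sdiff_eq_self_iff_disjoint.2 hdisj]

lemma sAC_eq_inter (n t i : ℕ) {B : Finset ℕ} (hB : B ⊆ Finset.range n) :
    B.filter (fun b => b % t = i) =
      ((Finset.range n).filter fun x => x % t = i).filter (fun x => x ∈ B) := by
  ext x
  simp only [Finset.mem_filter]
  constructor
  · rintro ⟨hxB, hx⟩
    exact ⟨⟨hB hxB, hx⟩, hxB⟩
  · rintro ⟨⟨_, hx⟩, hxB⟩
    exact ⟨hxB, hx⟩

lemma sum_sAC_over (n r t i : ℕ) (hr : 1 ≤ r) :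
    ∑ B ∈ (Finset.range n).powersetCard r, sAC t B i =
      ((Finset.range n).filter fun x => x % t = i).card * (n - 1).choose (r - 1) := by
  set C := (Finset.range n).filter fun x => x % t = i with hC
  have hform : ∀ B ∈ (Finset.range n).powersetCard r,
      sAC t B i = ∑ x ∈ C, if x ∈ B then 1 else 0 := by
    intro B hB
    rw [Finset.mem_powersetCard] at hB
    unfold sAC
    rw [sAC_eq_inter n t i hB.1, Finset.card_filter]
  rw [Finset.sum_congr rfl hform, Finset.sum_comm]
  have hper : ∀ x ∈ C, ∑ B ∈ (Finset.range n).powersetCard r, (if x ∈ B then 1 else 0) =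
      (n - 1).choose (r - 1) := by
    intro x hx
    rw [← Finset.card_filter]
    have hxn : ({x} : Finset ℕ) ⊆ Finset.range n := by
      simp only [Finset.singleton_subset_iff]
      exact Finset.mem_of_mem_filter x hx
    have := count_contains (Finset.range n) {x} r hxn (by simpa using hr)
    simp only [Finset.card_singleton, Finset.card_range] at this
    rw [← this]
    congr 1
    apply Finset.filter_congr
    intro B _
    simp [Finset.singleton_subset_iff]
  rw [Finset.sum_congr rfl hper, Finset.sum_const, smul_eq_mul]

lemma powersetCard_two_filter (n t i : ℕ) {B : Finset ℕ} (hB : B ⊆ Finset.range n) :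
    (B.filter (fun b => b % t = i)).powersetCard 2 =
      (((Finset.range n).filter fun x => x % t = i).powersetCard 2).filter
        (fun A => A ⊆ B) := by
  rw [sAC_eq_inter n t i hB]
  ext A
  simp only [Finset.mem_powersetCard, Finset.mem_filter, Finset.subset_iff]
  constructor
  · rintro ⟨hsub, hc⟩
    exact ⟨⟨fun x hx => (hsub hx).1, hc⟩, fun x hx => (hsub hx).2⟩
  · rintro ⟨⟨hsub, hc⟩, hsB⟩
    exact ⟨fun x hx => ⟨hsub hx, hsB hx⟩, hc⟩

lemma sum_choose2_over (n r t i : ℕ) (hr : 2 ≤ r) :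
    ∑ B ∈ (Finset.range n).powersetCard r, (sAC t B i).choose 2 =
      ((Finset.range n).filter fun x => x % t = i).card.choose 2 * (n - 2).choose (r - 2) := by
  set C := (Finset.range n).filter fun x => x % t = i with hC
  have hform : ∀ B ∈ (Finset.range n).powersetCard r,
      (sAC t B i).choose 2 = ∑ A ∈ C.powersetCard 2, if A ⊆ B then 1 else 0 := by
    intro B hB
    rw [Finset.mem_powersetCard] at hB
    unfold sAC
    rw [← Finset.card_powersetCard 2 (B.filter (fun b => b % t = i)),
      powersetCard_two_filter n t i hB.1, Finset.card_filter]
  rw [Finset.sum_congr rfl hform, Finset.sum_comm]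
  have hper : ∀ A ∈ C.powersetCard 2,
      ∑ B ∈ (Finset.range n).powersetCard r, (if A ⊆ B then 1 else 0) =
      (n - 2).choose (r - 2) := by
    intro A hA
    rw [Finset.mem_powersetCard] at hA
    rw [← Finset.card_filter]
    have hAn : A ⊆ Finset.range n := hA.1.trans (Finset.filter_subset _ _)
    have := count_contains (Finset.range n) A r hAn (by omega)
    rw [Finset.card_range, hA.2] at this
    exact this
  rw [Finset.sum_congr rfl hper, Finset.sum_const, smul_eq_mul, Finset.card_powersetCard]

lemma card_residue_class (n t i : ℕ) (hi : i < t) (hdvd : t ∣ n) :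
    ((Finset.range n).filter fun x => x % t = i).card = n / t := by
  have ht : 0 < t := by omega
  have himg : (Finset.range n).filter (fun x => x % t = i) =
      (Finset.range (n / t)).image (fun m => i + m * t) := by
    ext x
    simp only [Finset.mem_filter, Finset.mem_range, Finset.mem_image]
    constructor
    · rintro ⟨hxn, hxi⟩
      refine ⟨x / t, Nat.div_lt_div_of_lt_of_dvd hdvd hxn, ?_⟩
      have h1 := Nat.mod_add_div x t
      have h2 : t * (x / t) = x / t * t := Nat.mul_comm _ _
      omega
    · rintro ⟨m, hm, rfl⟩
      constructor
      · have h1 : m + 1 ≤ n / t := hm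
        have h2 : (m + 1) * t ≤ (n / t) * t := Nat.mul_le_mul_right t h1
        rw [Nat.div_mul_cancel hdvd] at h2
        have : m * t + t ≤ n := by
          calc m * t + t = (m + 1) * t := by ring
            _ ≤ n := h2
        omega
      · rw [Nat.add_mul_mod_self_right, Nat.mod_eq_of_lt hi]
  rw [himg, Finset.card_image_of_injective, Finset.card_range]
  intro x y hxy
  simp only at hxy
  have : x * t = y * t := by omega
  exact Nat.eq_of_mul_eq_mul_right ht this

lemma sum_just_total (n r t : ℕ) (hr : 2 ≤ r) (ht : 1 ≤ t) (hdvd : t ∣ n) :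
    ∑ B ∈ (Finset.range n).powersetCard r, (∑ b ∈ sJust t B, b) =
      (∑ i ∈ Finset.range t, i) * ((n / t) * (n - 1).choose (r - 1)) +
        t * (t * ((n / t).choose 2 * (n - 2).choose (r - 2))) := by
  have hstep : ∀ B ∈ (Finset.range n).powersetCard r,
      (∑ b ∈ sJust t B, b) =
        ∑ i ∈ Finset.range t, (sAC t B i * i + t * (sAC t B i).choose 2) := by
    intro B _
    rw [sum_sJust t ht B]
    apply Finset.sum_congr rfl
    intro i _
    congr 1
    congr 1
    rw [Finset.sum_range_id, Nat.choose_two_right]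
  rw [Finset.sum_congr rfl hstep, Finset.sum_comm]
  have hinner : ∀ i ∈ Finset.range t,
      ∑ B ∈ (Finset.range n).powersetCard r, (sAC t B i * i + t * (sAC t B i).choose 2) =
        (n / t) * (n - 1).choose (r - 1) * i + t * ((n / t).choose 2 * (n - 2).choose (r - 2)) := by
    intro i hi
    rw [Finset.sum_add_distrib, ← Finset.sum_mul, ← Finset.mul_sum,
      sum_sAC_over n r t i (by omega), sum_choose2_over n r t i hr,
      card_residue_class n t i (Finset.mem_range.1 hi) hdvd]
  rw [Finset.sum_congr rfl hinner, Finset.sum_add_distrib, Finset.sum_const,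
    Finset.card_range, smul_eq_mul]
  congr 1
  · rw [Finset.sum_mul]
    apply Finset.sum_congr rfl
    intro i _
    ring

lemma nat_choose_two_mul_two (m : ℕ) : m.choose 2 * 2 = m * (m - 1) := by
  rw [Nat.choose_two_right, ← Finset.sum_range_id, Finset.sum_range_id_mul_two]

lemma nat_half_rr_mul_two (r : ℕ) (hr : 1 ≤ r) : r * (r - 1) / 2 * 2 = r * (r - 1) := by
  apply Nat.div_mul_cancel
  have h : Even ((r - 1) * (r - 1 + 1)) := Nat.even_mul_succ_self (r - 1)
  rw [show r - 1 + 1 = r by omega, Nat.mul_comm] at h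
  exact h.two_dvd

/-- If `t ∣ r` and `t ∣ s`, the average size of the `t`-core of a uniformly
random partition in `Par_{r,s}` equals `((t−1)/2) · rs/(r+s−1)`. -/
theorem expected_core_size_divisible (r s t : ℕ) (hr : 1 ≤ r) (hs : 1 ≤ s) (ht : 2 ≤ t)
    (hrt : t ∣ r) (hst : t ∣ s) :
    (1 / ((r + s).choose r : ℚ)) *
        ∑ᶠ lam ∈ {lam : Fin r → ℕ | IsRectPartition r s lam}, (coreSize r t lam : ℚ) =
      (((t : ℚ) - 1) / 2) * ((r : ℚ) * (s : ℚ) / ((r : ℚ) + (s : ℚ) - 1)) := by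
  have hr2 : 2 ≤ r := le_trans ht (Nat.le_of_dvd hr hrt)
  have hs2 : 2 ≤ s := le_trans ht (Nat.le_of_dvd hs hst)
  have ht1 : 1 ≤ t := by omega
  set n := r + s with hn
  have hdvdn : t ∣ n := Dvd.dvd.add hrt hst
  have htn : t ≤ n := Nat.le_of_dvd (by omega) hdvdn
  set P := (Finset.range n).powersetCard r with hPdef
  have hsetEq : {lam : Fin r → ℕ | IsRectPartition r s lam} = ↑(P.image (invLam r)) := by
    ext lam
    simp only [Set.mem_setOf_eq, Finset.coe_image, Set.mem_image, Finset.mem_coe]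
    constructor
    · intro hlam
      exact ⟨betaSet r lam, betaSet_mem_powersetCard hlam, invLam_betaSet hlam⟩
    · rintro ⟨B, hB, rfl⟩
      exact isRectPartition_invLam hB hr
  rw [hsetEq, finsum_mem_coe_finset]
  rw [Finset.sum_image (by
    intro B hB B' hB' hEq
    have h1 := betaSet_invLam hB hr
    have h2 := betaSet_invLam hB' hr
    rw [← h1, ← h2, hEq])]
  have hcore : ∀ B ∈ P, (coreSize r t (invLam r B) : ℚ) =
      ((∑ b ∈ sJust t B, b : ℕ) : ℚ) - ((r * (r - 1) / 2 : ℕ) : ℚ) := by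
    intro B hB
    have hbeta := betaSet_invLam hB hr
    have hjust : justification r t (invLam r B) = sJust t B := by
      show sJust t (betaSet r (invLam r B)) = sJust t B
      rw [hbeta]
    have hcardJ : (sJust t B).card = r := by
      rw [card_sJust t ht1 B, (Finset.mem_powersetCard.1 hB).2]
    have hgeNat : r * (r - 1) / 2 ≤ ∑ b ∈ sJust t B, b := by
      have h3 := sum_finset_ge (sJust t B)
      rwa [hcardJ, Finset.sum_range_id] at h3
    unfold coreSize
    rw [hjust, Nat.cast_sub hgeNat]
  rw [Finset.sum_congr rfl hcore, Finset.sum_sub_distrib, Finset.sum_const,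
    ← Nat.cast_sum, sum_just_total n r t hr2 ht1 hdvdn]
  have hcardP : P.card = n.choose r := by
    rw [hPdef, Finset.card_powersetCard, Finset.card_range]
  rw [hcardP]
  -- abbreviations
  set S := (∑ i ∈ Finset.range t, i) with hSdef
  set M := n / t with hMdef
  set K := (n - 1).choose (r - 1) with hKdef
  set L := (n - 2).choose (r - 2) with hLdef
  set N := n.choose r with hNdef
  have hN0 : (N : ℚ) ≠ 0 := by
    have : 0 < N := Nat.choose_pos (by omega : r ≤ n)
    exact_mod_cast this.ne'
  have hn0 : (n : ℚ) ≠ 0 := by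
    have : (0 : ℚ) < n := by exact_mod_cast (by omega : 0 < n)
    exact this.ne'
  have hn1 : (n : ℚ) - 1 ≠ 0 := by
    have : (2 : ℚ) ≤ n := by exact_mod_cast (by omega : 2 ≤ n)
    intro hcon
    linarith
  have ht0 : (t : ℚ) ≠ 0 := by
    have : (0 : ℚ) < t := by exact_mod_cast (by omega : 0 < t)
    exact this.ne'
  have hM1 : 1 ≤ M := by
    rw [hMdef]
    exact Nat.one_le_div_iff (by omega) |>.2 htn
  have hKv : (K : ℚ) = r * N / n := by
    have h := Nat.add_one_mul_choose_eq (n - 1) (r - 1)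
    rw [show n - 1 + 1 = n by omega, show r - 1 + 1 = r by omega] at h
    have hq : (n : ℚ) * K = N * r := by exact_mod_cast h
    rw [eq_div_iff hn0]
    linarith
  have hLv : (L : ℚ) = ((r : ℚ) - 1) * K / ((n : ℚ) - 1) := by
    have h := Nat.add_one_mul_choose_eq (n - 2) (r - 2)
    rw [show n - 2 + 1 = n - 1 by omega, show r - 2 + 1 = r - 1 by omega] at h
    have hq := congrArg (fun x : ℕ => (x : ℚ)) h
    push_cast [Nat.cast_sub (by omega : 1 ≤ n), Nat.cast_sub (by omega : 1 ≤ r)] at hq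
    rw [eq_div_iff hn1]
    linarith
  have hSv : (S : ℚ) = (t : ℚ) * ((t : ℚ) - 1) / 2 := by
    have h := Finset.sum_range_id_mul_two t
    rw [← hSdef] at h
    have hq := congrArg (fun x : ℕ => (x : ℚ)) h
    push_cast [Nat.cast_sub (by omega : 1 ≤ t)] at hq
    rw [eq_div_iff (two_ne_zero)]
    linarith
  have hC2v : ((M.choose 2 : ℕ) : ℚ) = (M : ℚ) * ((M : ℚ) - 1) / 2 := by
    have h := nat_choose_two_mul_two M
    have hq := congrArg (fun x : ℕ => (x : ℚ)) h
    push_cast [Nat.cast_sub hM1] at hq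
    rw [eq_div_iff (two_ne_zero)]
    linarith
  have hcv : ((r * (r - 1) / 2 : ℕ) : ℚ) = (r : ℚ) * ((r : ℚ) - 1) / 2 := by
    have h := nat_half_rr_mul_two r hr
    have hq := congrArg (fun x : ℕ => (x : ℚ)) h
    push_cast [Nat.cast_sub (by omega : 1 ≤ r)] at hq
    rw [eq_div_iff (two_ne_zero)]
    linarith
  have hMv : (M : ℚ) = (n : ℚ) / t := by
    have h : M * t = n := Nat.div_mul_cancel hdvdn
    have hq : (M : ℚ) * t = n := by exact_mod_cast h
    rw [eq_div_iff ht0]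
    linarith
  have hsval : (s : ℚ) = (n : ℚ) - r := by
    have : (n : ℚ) = r + s := by exact_mod_cast congrArg (fun x : ℕ => (x : ℚ)) hn
    linarith
  push_cast
  rw [hLv, hKv, hC2v, hSv, hcv, hMv, hsval]
  rw [show (r:ℚ) + ((n:ℚ) - r) - 1 = (n:ℚ) - 1 by ring]
  field_simp
  ring
end

section
/- Let t ≥ 2 be an integer, σ > 0 a real number, and u a real number with u < 1/(tσ²). Then the Gaussian-type integral over ℝ^{t−1} satisfies: ∫_{ℝ^{t−1}} exp( (ut/2 − 1/(2σ²)) · ( z_1² + z_2² + ... + z_{t−1}² + (z_1 + z_2 + ... + z_{t−1})² ) ) dz_1 ··· dz_{t−1} = sqrt( (2πσ²)^{t−1} / t ) · (1 − utσ²)^{−(t−1)/2}. In particular, if Z = (Z_1, ..., Z_{t−1}) has the centered multivariate normal density f(z) = sqrt( t/(2πσ²)^{t−1} ) · exp( −(1/(2σ²))( |z|² + (z_1+...+z_{t−1})² ) ) on ℝ^{t−1}, then E[ exp( (ut/2)( |Z|² + (Z_1+...+Z_{t−1})² ) ) ] = (1 − utσ²)^{−(t−1)/2}. -/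
open Finset MeasureTheory Real

lemma integrable_gauss_pi {n : ℕ} {c b : ℝ} (hc : c < 0) (hb : b ≤ 0) :
    Integrable (fun z : Fin n → ℝ =>
      Real.exp (c * ∑ i, z i ^ 2 + b * (∑ i, z i) ^ 2)) := by
  have h1 : Integrable (fun z : Fin n → ℝ => ∏ i, Real.exp (c * z i ^ 2)) :=
    Integrable.fintype_prod (ι := Fin n) (E := ℝ) (f := fun (_ : Fin n) (x : ℝ) => Real.exp (c * x ^ 2)) (fun i => by
      have := integrable_exp_neg_mul_sq (neg_pos.2 hc)
      rwa [neg_neg] at this)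
  refine h1.mono' ?_ ?_
  · apply Continuous.aestronglyMeasurable
    fun_prop
  · filter_upwards with z
    rw [Real.norm_eq_abs, abs_of_pos (Real.exp_pos _), ← Real.exp_sum, ← Finset.mul_sum]
    apply Real.exp_le_exp.2
    nlinarith [sq_nonneg (∑ i, z i), mul_nonpos_of_nonpos_of_nonneg hb (sq_nonneg (∑ i, z i))]

lemma gauss_pi_eval : ∀ (n : ℕ) (c b : ℝ), c < 0 → b < 0 →
    (∫ z : Fin (n+1) → ℝ, Real.exp (c * ∑ i, z i ^ 2 + b * (∑ i, z i) ^ 2)) =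
      Real.sqrt (Real.pi ^ (n+1) / ((-c) ^ n * (-(c + (n+1 : ℝ) * b)))) := by
  intro n
  induction n with
  | zero =>
    intro c b hc hb
    have e := MeasurableEquiv.funUnique (Fin 1) ℝ
    have h := ((volume_preserving_funUnique (Fin 1) ℝ).symm).integral_comp
      (MeasurableEquiv.funUnique (Fin 1) ℝ).symm.measurableEmbedding
      (fun z : Fin 1 → ℝ => Real.exp (c * ∑ i, z i ^ 2 + b * (∑ i, z i) ^ 2))
    refine h.symm.trans ?_
    have : ∀ x : ℝ, ((MeasurableEquiv.funUnique (Fin 1) ℝ).symm x : Fin 1 → ℝ) = fun _ => x := by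
      intro x; rfl
    simp only [this, Fin.sum_univ_one]
    have : ∀ x : ℝ, c * x ^ 2 + b * x ^ 2 = -(-(c+b)) * x ^ 2 := by intro x; ring
    simp only [this]
    rw [integral_gaussian]
    norm_num
  | succ n ih =>
    intro c b hc hb
    have hcb : c + b < 0 := by linarith
    have hcbne : c + b ≠ 0 := ne_of_lt hcb
    have hb' : c * b / (c + b) < 0 :=
      div_neg_of_pos_of_neg (mul_pos_of_neg_of_neg hc hb) hcb
    set F : (Fin (n+2) → ℝ) → ℝ :=
      fun z => Real.exp (c * ∑ i, z i ^ 2 + b * (∑ i, z i) ^ 2) with hF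
    have hInt : Integrable F := integrable_gauss_pi hc hb.le
    have hmp := (volume_preserving_piFinSuccAbove (fun _ : Fin (n+2) => ℝ) 0).symm
    have hIntc : Integrable (fun p : ℝ × (Fin (n+1) → ℝ) =>
        F ((MeasurableEquiv.piFinSuccAbove (fun _ : Fin (n+2) => ℝ) 0).symm p)) :=
      (hmp.integrable_comp_emb
        (MeasurableEquiv.piFinSuccAbove (fun _ : Fin (n+2) => ℝ) 0).symm.measurableEmbedding).2 hInt
    have key : (∫ z : Fin (n+2) → ℝ, F z) = ∫ p : ℝ × (Fin (n+1) → ℝ),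
        F ((MeasurableEquiv.piFinSuccAbove (fun _ : Fin (n+2) => ℝ) 0).symm p) :=
      (hmp.integral_comp
        (MeasurableEquiv.piFinSuccAbove (fun _ : Fin (n+2) => ℝ) 0).symm.measurableEmbedding F).symm
    have hs : ∀ (x : ℝ) (y : Fin (n+1) → ℝ),
        F ((MeasurableEquiv.piFinSuccAbove (fun _ : Fin (n+2) => ℝ) 0).symm (x, y)) =
          Real.exp (c * (x ^ 2 + ∑ i, y i ^ 2) + b * (x + ∑ i, y i) ^ 2) := by
      intro x y
      have : ((MeasurableEquiv.piFinSuccAbove (fun _ : Fin (n+2) => ℝ) 0).symm (x, y) :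
          Fin (n+2) → ℝ) = Fin.cons x y := by
        ext j
        simp [MeasurableEquiv.piFinSuccAbove, Fin.insertNth_zero']
      rw [this, hF]
      simp [Fin.sum_univ_succ]
    have hB : (0:ℝ) < -(c + b) := by linarith
    have inner : ∀ y : Fin (n+1) → ℝ,
        (∫ x : ℝ, Real.exp (c * (x ^ 2 + ∑ i, y i ^ 2) + b * (x + ∑ i, y i) ^ 2)) =
          Real.sqrt (Real.pi / (-(c+b))) *
            Real.exp (c * ∑ i, y i ^ 2 + (c * b / (c + b)) * (∑ i, y i) ^ 2) := by
      intro y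
      have hexp : ∀ x : ℝ, c * (x ^ 2 + ∑ i, y i ^ 2) + b * (x + ∑ i, y i) ^ 2 =
          -(-(c+b)) * (x + b * (∑ i, y i) / (c + b)) ^ 2 +
            (c * ∑ i, y i ^ 2 + (c * b / (c + b)) * (∑ i, y i) ^ 2) := by
        intro x; field_simp; ring
      simp only [hexp, Real.exp_add]
      rw [MeasureTheory.integral_mul_const,
        MeasureTheory.integral_add_right_eq_self
          (fun x => Real.exp (-(-(c+b)) * x ^ 2)) (b * (∑ i, y i) / (c + b)),
        integral_gaussian]
    rw [key, MeasureTheory.Measure.volume_eq_prod, MeasureTheory.integral_prod_symm _ hIntc]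
    simp only [hs, inner]
    rw [MeasureTheory.integral_const_mul, ih c (c * b / (c + b)) hc hb',
      ← Real.sqrt_mul (div_nonneg Real.pi_pos.le hB.le)]
    congr 1
    have h1 : c + ((n:ℝ)+1) * (c * b / (c + b)) =
        c * (c + ((n:ℝ)+2) * b) / (c + b) := by field_simp; ring
    have h2 : c + ((n:ℝ)+1+1) * b < 0 := by nlinarith [Nat.cast_nonneg (α := ℝ) n]
    rw [h1, div_mul_div_comm]
    congr 1
    · ring
    · push_cast
      field_simp
      ring

/-- A Gaussian-type integral over `ℝ^{t−1}`: for `σ > 0` and `u < 1/(tσ²)`,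
`∫ exp((ut/2 − 1/(2σ²))(|z|² + (Σ z_i)²)) dz = √((2πσ²)^{t−1}/t) · (1 − utσ²)^{−(t−1)/2}`,
and consequently for `Z` with the stated multivariate normal density `f`,
`E[exp((ut/2)(|Z|² + (Σ Z_i)²))] = (1 − utσ²)^{−(t−1)/2}`. -/
theorem gaussian_mgf_integral (t : ℕ) (ht : 2 ≤ t) (σ u : ℝ) (hσ : 0 < σ)
    (hu : u < 1 / ((t : ℝ) * σ ^ 2)) :
    (∫ z : Fin (t - 1) → ℝ,
        Real.exp ((u * (t : ℝ) / 2 - 1 / (2 * σ ^ 2)) *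
          ((∑ i, z i ^ 2) + (∑ i, z i) ^ 2))) =
      Real.sqrt ((2 * Real.pi * σ ^ 2) ^ (t - 1) / (t : ℝ)) *
        (1 - u * (t : ℝ) * σ ^ 2) ^ (-(((t : ℝ) - 1) / 2)) ∧
    (∫ z : Fin (t - 1) → ℝ,
        (Real.sqrt ((t : ℝ) / (2 * Real.pi * σ ^ 2) ^ (t - 1)) *
            Real.exp (-(1 / (2 * σ ^ 2)) * ((∑ i, z i ^ 2) + (∑ i, z i) ^ 2))) *
          Real.exp ((u * (t : ℝ) / 2) * ((∑ i, z i ^ 2) + (∑ i, z i) ^ 2))) =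
      (1 - u * (t : ℝ) * σ ^ 2) ^ (-(((t : ℝ) - 1) / 2)) := by
  obtain ⟨m, hm⟩ : ∃ m, t - 1 = m + 1 := ⟨t - 2, by omega⟩
  have htm : (t : ℝ) = (m : ℝ) + 2 := by
    have h : t = m + 2 := by omega
    rw [h]; push_cast; ring
  rw [hm]
  have hσ2 : (0:ℝ) < σ ^ 2 := by positivity
  have ht0 : (0:ℝ) < (t:ℝ) := by rw [htm]; positivity
  have hA : 0 < 1 - u * (t:ℝ) * σ ^ 2 := by
    rw [lt_div_iff₀ (by positivity)] at hu
    nlinarith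
  set c : ℝ := u * (t:ℝ) / 2 - 1 / (2 * σ ^ 2) with hc_def
  have hcA : -c = (1 - u * (t:ℝ) * σ ^ 2) / (2 * σ ^ 2) := by
    rw [hc_def]; field_simp; ring
  have hc : c < 0 := by
    have h0 : 0 < -c := hcA ▸ div_pos hA (by positivity)
    linarith
  have key := gauss_pi_eval m c c hc hc
  have h1 : (∫ z : Fin (m+1) → ℝ, Real.exp (c * ((∑ i, z i ^ 2) + (∑ i, z i) ^ 2))) =
      Real.sqrt ((2 * Real.pi * σ ^ 2) ^ (m+1) / (t:ℝ)) *
        (1 - u * (t:ℝ) * σ ^ 2) ^ (-(((t:ℝ) - 1) / 2)) := by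
    simp_rw [mul_add]
    rw [key]
    have e1 : (-(((t:ℝ) - 1) / 2)) = (((m+1 : ℕ) : ℝ)) * (-(1/2) : ℝ) := by
      rw [htm]; push_cast; ring
    rw [e1, Real.rpow_mul hA.le, Real.rpow_natCast,
      Real.rpow_neg (pow_nonneg hA.le _), ← Real.sqrt_eq_rpow, ← Real.sqrt_inv,
      ← Real.sqrt_mul (by positivity)]
    have e2 : -(c + ((m:ℝ) + 1) * c) = ((m:ℝ)+2) * (-c) := by ring
    rw [e2, hcA]
    congr 1
    rw [htm, div_pow]
    have hA' : (1 - u * ((m:ℝ)+2) * σ ^ 2) ≠ 0 := by rw [htm] at hA; linarith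
    field_simp
    ring
  constructor
  · exact h1
  · have h2 : ∀ z : Fin (m+1) → ℝ,
        (Real.sqrt ((t:ℝ)/(2*Real.pi*σ^2)^(m+1)) *
            Real.exp (-(1/(2*σ^2)) * ((∑ i, z i ^2) + (∑ i, z i)^2))) *
          Real.exp ((u*(t:ℝ)/2) * ((∑ i, z i ^2) + (∑ i, z i)^2)) =
        Real.sqrt ((t:ℝ)/(2*Real.pi*σ^2)^(m+1)) *
          Real.exp (c * ((∑ i, z i ^2) + (∑ i, z i)^2)) := by
      intro z
      rw [mul_assoc, ← Real.exp_add]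
      congr 1
      rw [hc_def]; ring
    simp only [h2]
    rw [MeasureTheory.integral_const_mul, h1, ← mul_assoc]
    have h3 : Real.sqrt ((t:ℝ)/(2*Real.pi*σ^2)^(m+1)) *
        Real.sqrt ((2*Real.pi*σ^2)^(m+1)/(t:ℝ)) = 1 := by
      rw [← Real.sqrt_mul (by positivity),
        show (t:ℝ)/(2*Real.pi*σ^2)^(m+1) * ((2*Real.pi*σ^2)^(m+1)/(t:ℝ)) = 1 from by
          field_simp]
      exact Real.sqrt_one
    rw [h3, one_mul]
end
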